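/- Let B₁, ..., B_n be i.i.d. Bernoulli(1/2) random variables taking values in {0,1}, and let (bᵢ) and (dᵢ) be integer sequences. Then for every integer m, P(Σᵢ (bᵢ + dᵢBᵢ) = m) ≤ 2^{−k}, where k = |{L(dᵢ) : 1 ≤ i ≤ n}| and L(d) denotes the exponent of the largest power of 2 dividing d (with the convention that this set only counts distinct finite values L(dᵢ) for dᵢ ≠ 0, treated appropriately). -/

import Mathlib

open MeasureTheory ProbabilityTheory

section Aux

variable {Ω : Type*} [MeasureSpace Ω] [IsProbabilityMeasure (ℙ : Measure Ω)]

/-- Convolution bound: if `X` and `Y` are independent integer random variables and every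
value of `Y` has probability at most `p`, then every value of `X + Y` has probability
at most `p`. -/
lemma conv_bound (X Y : Ω → ℤ) (hX : Measurable X) (hY : Measurable Y)
    (h : IndepFun X Y ℙ) (p : ENNReal) (hp : ∀ c : ℤ, ℙ {ω | Y ω = c} ≤ p) (m : ℤ) :
    ℙ {ω | X ω + Y ω = m} ≤ p := by
  have hset : {ω | X ω + Y ω = m} = ⋃ x : ℤ, (X ⁻¹' {x} ∩ Y ⁻¹' {m - x}) := by
    ext ω
    simp only [Set.mem_setOf_eq, Set.mem_iUnion, Set.mem_inter_iff, Set.mem_preimage,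
      Set.mem_singleton_iff]
    constructor
    · intro hω; exact ⟨X ω, rfl, by omega⟩
    · rintro ⟨x, hx, hy⟩; omega
  have hd : Pairwise (Function.onFun Disjoint fun x : ℤ => X ⁻¹' {x} ∩ Y ⁻¹' {m - x}) := by
    intro x x' hxx'
    refine Set.disjoint_left.mpr ?_
    rintro ω ⟨hx, -⟩ ⟨hx', -⟩
    simp only [Set.mem_preimage, Set.mem_singleton_iff] at hx hx'
    exact hxx' (hx ▸ hx')
  have hm : ∀ x : ℤ, MeasurableSet (X ⁻¹' {x} ∩ Y ⁻¹' {m - x}) := fun x =>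
    (hX (measurableSet_singleton x)).inter (hY (measurableSet_singleton _))
  rw [hset, measure_iUnion hd hm]
  calc ∑' x : ℤ, ℙ (X ⁻¹' {x} ∩ Y ⁻¹' {m - x})
      = ∑' x : ℤ, ℙ (X ⁻¹' {x}) * ℙ (Y ⁻¹' {m - x}) := by
        refine tsum_congr fun x => ?_
        exact h.measure_inter_preimage_eq_mul _ _ (measurableSet_singleton x)
          (measurableSet_singleton _)
    _ ≤ ∑' x : ℤ, ℙ (X ⁻¹' {x}) * p := by
        refine ENNReal.tsum_le_tsum fun x => ?_
        exact mul_le_mul_right (hp (m - x)) _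
    _ = (∑' x : ℤ, ℙ (X ⁻¹' {x})) * p := ENNReal.tsum_mul_right
    _ ≤ 1 * p := by
        gcongr
        have hdX : Pairwise (Function.onFun Disjoint fun x : ℤ => X ⁻¹' {x}) := by
          intro x x' hxx'
          refine Set.disjoint_left.mpr ?_
          intro ω hx hx'
          simp only [Set.mem_preimage, Set.mem_singleton_iff] at hx hx'
          exact hxx' (hx ▸ hx')
        rw [← measure_iUnion hdX fun x => hX (measurableSet_singleton x)]
        exact prob_le_one
    _ = p := one_mul p

/-- The main inner bound: for a set `S` of indices with nonzero weights having pairwise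
distinct 2-adic valuations, the weighted sum of independent Bernoulli(1/2)'s takes each
value with probability at most `(1/2) ^ S.card`. -/
lemma inner_bound {n : ℕ} (B : Fin n → Ω → ℤ) (d : Fin n → ℤ)
    (hmeas : ∀ i, Measurable (B i))
    (hindep : iIndepFun B ℙ)
    (hB : ∀ i, ℙ {ω | B i ω = 0} = 1/2 ∧ ℙ {ω | B i ω = 1} = 1/2)
    (S : Finset (Fin n)) :
    ∀ (_ : ∀ i ∈ S, d i ≠ 0)
      (_ : Set.InjOn (fun i => padicValInt 2 (d i)) S) (c : ℤ),
      ℙ {ω | ∑ i ∈ S, d i * B i ω = c} ≤ (1/2 : ENNReal) ^ S.card := by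
  -- preliminary facts used in the induction
  have hfmeas : ∀ i, Measurable (fun ω => d i * B i ω) := fun i => (hmeas i).const_mul (d i)
  have hfindep : iIndepFun (fun i ω => d i * B i ω) ℙ := by
    have := hindep.comp (fun i (x : ℤ) => d i * x)
      (fun i => measurable_const_mul (d i))
    exact this
  -- the a.s. set where all `B i` take values in {0,1}
  have hA : ℙ {ω | ¬ ∀ i, B i ω = 0 ∨ B i ω = 1} = 0 := by
    have h1 : ∀ i, ℙ {ω | ¬ (B i ω = 0 ∨ B i ω = 1)} = 0 := by
      intro i
      have hdisj : Disjoint {ω | B i ω = 0} {ω | B i ω = 1} := by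
        refine Set.disjoint_left.mpr ?_
        intro ω h0 h1
        simp only [Set.mem_setOf_eq] at h0 h1
        omega
      have hms0 : MeasurableSet {ω | B i ω = 0} := hmeas i (measurableSet_singleton 0)
      have hms1 : MeasurableSet {ω | B i ω = 1} := hmeas i (measurableSet_singleton 1)
      have hu : ℙ ({ω | B i ω = 0} ∪ {ω | B i ω = 1}) = 1 := by
        rw [measure_union hdisj hms1, (hB i).1, (hB i).2, one_div,
          ENNReal.inv_two_add_inv_two]
      have hcompl : ℙ (({ω | B i ω = 0} ∪ {ω | B i ω = 1})ᶜ) = 0 := by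
        rw [measure_compl (hms0.union hms1) (measure_ne_top _ _), hu, measure_univ,
          tsub_self]
      have hseteq : {ω | ¬ (B i ω = 0 ∨ B i ω = 1)} =
          ({ω | B i ω = 0} ∪ {ω | B i ω = 1})ᶜ := by
        ext ω; simp [not_or]
      rw [hseteq]
      exact hcompl
    have hsub : {ω | ¬ ∀ i, B i ω = 0 ∨ B i ω = 1} ⊆
        ⋃ i, {ω | ¬ (B i ω = 0 ∨ B i ω = 1)} := by
      intro ω hω
      simp only [Set.mem_setOf_eq, not_forall] at hω
      obtain ⟨i, hi⟩ := hω
      exact Set.mem_iUnion.mpr ⟨i, hi⟩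
    exact measure_mono_null hsub (measure_iUnion_null h1)
  induction S using Finset.strongInduction with
  | _ S ih =>
  intro hd hinj c
  rcases S.eq_empty_or_nonempty with rfl | hne
  · simp only [Finset.sum_empty, Finset.card_empty, pow_zero]
    exact prob_le_one
  · obtain ⟨i₀, hi₀S, hmin⟩ := S.exists_min_image (fun i => padicValInt 2 (d i)) hne
    set v := padicValInt 2 (d i₀) with hv
    set t : ℤ := 2 ^ (v + 1) with ht
    have hdvd : ∀ i ∈ S.erase i₀, t ∣ d i := by
      intro i hi
      have hiS := Finset.mem_of_mem_erase hi
      have hne' : padicValInt 2 (d i) ≠ v := by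
        intro h
        exact Finset.ne_of_mem_erase hi (hinj hiS hi₀S h)
      have hge : v + 1 ≤ padicValInt 2 (d i) :=
        lt_of_le_of_ne (hmin i hiS) (Ne.symm hne')
      have h2 := (padicValInt_dvd_iff (p := 2) (v + 1) (d i)).mpr (Or.inr hge)
      rw [ht]
      exact_mod_cast h2
    have hndvd : ¬ t ∣ d i₀ := by
      intro h
      rw [ht] at h
      have h' : ((2 : ℕ) : ℤ) ^ (v + 1) ∣ d i₀ := by exact_mod_cast h
      rcases (padicValInt_dvd_iff (p := 2) (v + 1) (d i₀)).mp h' with h0 | hle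
      · exact hd i₀ hi₀S h0
      · omega
    -- independence of the rest of the sum from the chosen coordinate
    set f : Fin n → Ω → ℤ := fun i ω => d i * B i ω with hf
    have hIF : IndepFun (∑ j ∈ S.erase i₀, f j) (f i₀) ℙ :=
      hfindep.indepFun_finsetSum_of_notMem hfmeas (Finset.notMem_erase i₀ S)
    -- probabilities of the chosen coordinate
    have hf0 : f i₀ ⁻¹' {(0 : ℤ)} = {ω | B i₀ ω = 0} := by
      ext ω
      simp only [Set.mem_preimage, Set.mem_singleton_iff, Set.mem_setOf_eq, hf,
        mul_eq_zero]
      constructor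
      · rintro (h | h)
        · exact absurd h (hd i₀ hi₀S)
        · exact h
      · intro h; exact Or.inr h
    have hf1 : f i₀ ⁻¹' {d i₀} = {ω | B i₀ ω = 1} := by
      ext ω
      simp only [Set.mem_preimage, Set.mem_singleton_iff, Set.mem_setOf_eq, hf]
      constructor
      · intro h
        have := mul_left_cancel₀ (hd i₀ hi₀S) (h.trans (mul_one (d i₀)).symm)
        exact this
      · intro h; rw [h, mul_one]
    -- induction hypothesis for the erased set
    have hih : ∀ c' : ℤ, ℙ {ω | ∑ i ∈ S.erase i₀, d i * B i ω = c'} ≤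
        (1/2 : ENNReal) ^ (S.erase i₀).card := by
      intro c'
      refine ih (S.erase i₀) (Finset.erase_ssubset hi₀S)
        (fun i hi => hd i (Finset.mem_of_mem_erase hi)) ?_ c'
      exact hinj.mono (by intro x hx; exact Finset.mem_of_mem_erase hx)
    have hcard : (S.erase i₀).card + 1 = S.card := by
      rw [Finset.card_erase_of_mem hi₀S]
      have : 1 ≤ S.card := Finset.card_pos.mpr hne
      omega
    have hpow : (1/2 : ENNReal) ^ (S.erase i₀).card * (1/2 : ENNReal)
        = (1/2 : ENNReal) ^ S.card := by
      rw [← pow_succ, hcard]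
    -- the event, intersected with the a.s. set
    set E := {ω | ∑ i ∈ S, d i * B i ω = c} with hE
    have hEbound : ℙ E ≤ ℙ (E ∩ {ω | ∀ i, B i ω = 0 ∨ B i ω = 1}) := by
      have hsub : E ⊆ (E ∩ {ω | ∀ i, B i ω = 0 ∨ B i ω = 1}) ∪
          {ω | ¬ ∀ i, B i ω = 0 ∨ B i ω = 1} := by
        intro ω hω
        by_cases hall : ∀ i, B i ω = 0 ∨ B i ω = 1
        · exact Or.inl ⟨hω, hall⟩
        · exact Or.inr hall
      calc ℙ E ≤ ℙ ((E ∩ {ω | ∀ i, B i ω = 0 ∨ B i ω = 1}) ∪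
            {ω | ¬ ∀ i, B i ω = 0 ∨ B i ω = 1}) := measure_mono hsub
        _ ≤ ℙ (E ∩ {ω | ∀ i, B i ω = 0 ∨ B i ω = 1}) +
            ℙ {ω | ¬ ∀ i, B i ω = 0 ∨ B i ω = 1} := measure_union_le _ _
        _ = ℙ (E ∩ {ω | ∀ i, B i ω = 0 ∨ B i ω = 1}) := by rw [hA, add_zero]
    -- key structural fact on the good set
    have hkey : ∀ ω, ω ∈ E ∩ {ω | ∀ i, B i ω = 0 ∨ B i ω = 1} →
        (B i₀ ω = 0 ∧ ∑ j ∈ S.erase i₀, d j * B j ω = c) ∨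
        (B i₀ ω = 1 ∧ ∑ j ∈ S.erase i₀, d j * B j ω = c - d i₀) := by
      rintro ω ⟨hc, hall⟩
      rw [hE] at hc
      simp only [Set.mem_setOf_eq] at hc hall
      have hsplit : d i₀ * B i₀ ω + ∑ j ∈ S.erase i₀, d j * B j ω = c := by
        rw [← Finset.add_sum_erase S (fun i => d i * B i ω) hi₀S] at hc; exact hc
      rcases hall i₀ with hb | hb
      · left
        refine ⟨hb, ?_⟩
        rw [hb, mul_zero, zero_add] at hsplit
        exact hsplit
      · right
        refine ⟨hb, ?_⟩
        rw [hb, mul_one] at hsplit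
        omega
    have hrest_dvd : ∀ ω, (∀ i, B i ω = 0 ∨ B i ω = 1) →
        t ∣ ∑ j ∈ S.erase i₀, d j * B j ω := by
      intro ω hall
      refine Finset.dvd_sum fun j hj => ?_
      rcases hall j with hb | hb
      · rw [hb, mul_zero]; exact dvd_zero t
      · rw [hb, mul_one]; exact hdvd j hj
    by_cases h0 : t ∣ c
    · -- B i₀ must be 0
      have hsub2 : E ∩ {ω | ∀ i, B i ω = 0 ∨ B i ω = 1} ⊆
          (∑ j ∈ S.erase i₀, f j) ⁻¹' {c} ∩ f i₀ ⁻¹' {(0 : ℤ)} := by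
        intro ω hω
        rcases hkey ω hω with ⟨hb, hsum⟩ | ⟨hb, hsum⟩
        · constructor
          · simp only [Set.mem_preimage, Set.mem_singleton_iff, Finset.sum_apply, hf]
            exact hsum
          · simp only [Set.mem_preimage, Set.mem_singleton_iff, hf, hb, mul_zero]
        · exfalso
          have hdd := hrest_dvd ω hω.2
          rw [hsum] at hdd
          have hdiv : t ∣ d i₀ := by
            have h2 := dvd_sub h0 hdd
            rwa [sub_sub_cancel] at h2
          exact hndvd hdiv
      calc ℙ E ≤ ℙ (E ∩ {ω | ∀ i, B i ω = 0 ∨ B i ω = 1}) := hEbound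
        _ ≤ ℙ ((∑ j ∈ S.erase i₀, f j) ⁻¹' {c} ∩ f i₀ ⁻¹' {(0 : ℤ)}) :=
            measure_mono hsub2
        _ = ℙ ((∑ j ∈ S.erase i₀, f j) ⁻¹' {c}) * ℙ (f i₀ ⁻¹' {(0 : ℤ)}) :=
            hIF.measure_inter_preimage_eq_mul _ _ (measurableSet_singleton _)
              (measurableSet_singleton _)
        _ ≤ (1/2 : ENNReal) ^ (S.erase i₀).card * (1/2 : ENNReal) := by
            refine mul_le_mul' ?_ ?_
            · have : (∑ j ∈ S.erase i₀, f j) ⁻¹' {c} =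
                  {ω | ∑ i ∈ S.erase i₀, d i * B i ω = c} := by
                ext ω
                simp [Finset.sum_apply, hf]
              rw [this]; exact hih c
            · rw [hf0, (hB i₀).1]
        _ = (1/2 : ENNReal) ^ S.card := hpow
    · by_cases h1 : t ∣ (c - d i₀)
      · -- B i₀ must be 1
        have hsub2 : E ∩ {ω | ∀ i, B i ω = 0 ∨ B i ω = 1} ⊆
            (∑ j ∈ S.erase i₀, f j) ⁻¹' {c - d i₀} ∩ f i₀ ⁻¹' {d i₀} := by
          intro ω hω
          rcases hkey ω hω with ⟨hb, hsum⟩ | ⟨hb, hsum⟩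
          · exfalso
            have := hrest_dvd ω hω.2
            rw [hsum] at this
            exact h0 this
          · constructor
            · simp only [Set.mem_preimage, Set.mem_singleton_iff, Finset.sum_apply, hf]
              exact hsum
            · simp only [Set.mem_preimage, Set.mem_singleton_iff, hf, hb, mul_one]
        calc ℙ E ≤ ℙ (E ∩ {ω | ∀ i, B i ω = 0 ∨ B i ω = 1}) := hEbound
          _ ≤ ℙ ((∑ j ∈ S.erase i₀, f j) ⁻¹' {c - d i₀} ∩ f i₀ ⁻¹' {d i₀}) :=
              measure_mono hsub2
          _ = ℙ ((∑ j ∈ S.erase i₀, f j) ⁻¹' {c - d i₀}) * ℙ (f i₀ ⁻¹' {d i₀}) :=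
              hIF.measure_inter_preimage_eq_mul _ _ (measurableSet_singleton _)
                (measurableSet_singleton _)
          _ ≤ (1/2 : ENNReal) ^ (S.erase i₀).card * (1/2 : ENNReal) := by
              refine mul_le_mul' ?_ ?_
              · have : (∑ j ∈ S.erase i₀, f j) ⁻¹' {c - d i₀} =
                    {ω | ∑ i ∈ S.erase i₀, d i * B i ω = c - d i₀} := by
                  ext ω
                  simp [Finset.sum_apply, hf]
                rw [this]; exact hih (c - d i₀)
              · rw [hf1, (hB i₀).2]
          _ = (1/2 : ENNReal) ^ S.card := hpow
      · -- impossible: the event has measure zero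
        have hempty : E ∩ {ω | ∀ i, B i ω = 0 ∨ B i ω = 1} = ∅ := by
          ext ω
          simp only [Set.mem_inter_iff, Set.mem_empty_iff_false, iff_false, not_and]
          intro hωE hall
          rcases hkey ω ⟨hωE, hall⟩ with ⟨hb, hsum⟩ | ⟨hb, hsum⟩
          · exact h0 (hsum ▸ hrest_dvd ω hall)
          · exact h1 (hsum ▸ hrest_dvd ω hall)
        calc ℙ E ≤ ℙ (E ∩ {ω | ∀ i, B i ω = 0 ∨ B i ω = 1}) := hEbound
          _ = 0 := by rw [hempty, measure_empty]
          _ ≤ _ := zero_le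

end Aux

/-- Anticoncentration for weighted sums of i.i.d. Bernoulli(1/2): the probability of any
value is at most 2^{-k} where k is the number of distinct 2-adic valuations among the
nonzero weights. -/
theorem stmt3 {Ω : Type*} [MeasureSpace Ω] [IsProbabilityMeasure (ℙ : Measure Ω)]
    (n : ℕ) (B : Fin n → Ω → ℤ) (b d : Fin n → ℤ)
    (hmeas : ∀ i, Measurable (B i))
    (hindep : iIndepFun B ℙ)
    (hB : ∀ i, ℙ {ω | B i ω = 0} = 1/2 ∧ ℙ {ω | B i ω = 1} = 1/2) :
    ∀ m : ℤ, ℙ {ω | ∑ i, (b i + d i * B i ω) = m} ≤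
      (1/2 : ENNReal) ^ ((Finset.univ.filter (fun i => d i ≠ 0)).image
        (fun i => padicValInt 2 (d i))).card := by
  classical
  intro m
  set L : Fin n → ℕ := fun i => padicValInt 2 (d i) with hL
  set T : Finset (Fin n) := Finset.univ.filter (fun i => d i ≠ 0) with hT
  -- choose one representative index per distinct valuation
  have hex : ∀ w : {x // x ∈ T.image L}, ∃ i, i ∈ T ∧ L i = w.1 := by
    intro w
    have := w.2
    rw [Finset.mem_image] at this
    obtain ⟨i, hi, hLi⟩ := this
    exact ⟨i, hi, hLi⟩
  choose g hgT hgL using hex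
  set S : Finset (Fin n) := (T.image L).attach.image g with hS
  have hginj : Function.Injective g := by
    intro w w' h
    apply Subtype.ext
    rw [← hgL w, ← hgL w', h]
  have hcard : S.card = (T.image L).card := by
    rw [hS, Finset.card_image_of_injective _ hginj, Finset.card_attach]
  have hSsub : ∀ i ∈ S, i ∈ T := by
    intro i hi
    rw [hS, Finset.mem_image] at hi
    obtain ⟨w, -, rfl⟩ := hi
    exact hgT w
  have hdS : ∀ i ∈ S, d i ≠ 0 := by
    intro i hi
    have := hSsub i hi
    rw [hT, Finset.mem_filter] at this
    exact this.2
  have hinj : Set.InjOn L S := by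
    intro i hi j hj hij
    rw [Finset.mem_coe, hS, Finset.mem_image] at hi hj
    obtain ⟨w, -, rfl⟩ := hi
    obtain ⟨w', -, rfl⟩ := hj
    rw [hgL w, hgL w'] at hij
    exact congrArg g (Subtype.ext hij)
  -- split the sum
  set f : Fin n → Ω → ℤ := fun i ω => d i * B i ω with hf
  have hfmeas : ∀ i, Measurable (f i) := fun i => (hmeas i).const_mul (d i)
  have hfindep : iIndepFun f ℙ := by
    have := hindep.comp (fun i (x : ℤ) => d i * x)
      (fun i => measurable_const_mul (d i))
    exact this
  set Z : Ω → ℤ := fun ω => ∑ i ∈ Finset.univ \ S, d i * B i ω with hZ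
  set Y : Ω → ℤ := fun ω => ∑ i ∈ S, d i * B i ω with hY
  set c₀ : ℤ := ∑ i, b i with hc₀
  have hZmeas : Measurable Z := Finset.measurable_sum _ fun i _ => hfmeas i
  have hYmeas : Measurable Y := Finset.measurable_sum _ fun i _ => hfmeas i
  have hsum : ∀ ω, ∑ i, (b i + d i * B i ω) = c₀ + (Z ω + Y ω) := by
    intro ω
    rw [Finset.sum_add_distrib]
    congr 1
    rw [hZ, hY]
    exact (Finset.sum_sdiff (Finset.subset_univ S)).symm
  have hev : {ω | ∑ i, (b i + d i * B i ω) = m} = {ω | Z ω + Y ω = m - c₀} := by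
    ext ω
    simp only [Set.mem_setOf_eq, hsum ω]
    omega
  -- independence of the two partial sums
  have hIF0 : IndepFun (fun ω (i : (Finset.univ \ S : Finset (Fin n))) => f i ω)
      (fun ω (i : S) => f i ω) ℙ :=
    hfindep.indepFun_finset _ _ Finset.sdiff_disjoint hfmeas
  have hZY : IndepFun Z Y ℙ := by
    have h0 := hfindep.indepFun_finset (Finset.univ \ S) S Finset.sdiff_disjoint hfmeas
    have hm1 : Measurable (fun v : ((i : (Finset.univ \ S : Finset (Fin n))) → ℤ) =>
        ∑ i, v i) := Finset.measurable_sum Finset.univ fun i _ => measurable_pi_apply i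
    have hm2 : Measurable (fun v : ((i : S) → ℤ) => ∑ i, v i) :=
      Finset.measurable_sum Finset.univ fun i _ => measurable_pi_apply i
    have h1 := h0.comp hm1 hm2
    have heq1 : ((fun v : ((i : (Finset.univ \ S : Finset (Fin n))) → ℤ) => ∑ i, v i) ∘
        (fun ω (i : (Finset.univ \ S : Finset (Fin n))) => f i ω)) = Z := by
      funext ω
      show ∑ i : (Finset.univ \ S : Finset (Fin n)), f i ω = Z ω
      rw [hZ, hf]
      exact Finset.sum_coe_sort (Finset.univ \ S) (fun i => d i * B i ω)
    have heq2 : ((fun v : ((i : S) → ℤ) => ∑ i, v i) ∘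
        (fun ω (i : S) => f i ω)) = Y := by
      funext ω
      show ∑ i : S, f i ω = Y ω
      rw [hY, hf]
      exact Finset.sum_coe_sort S (fun i => d i * B i ω)
    rwa [heq1, heq2] at h1
  rw [hev, ← hcard]
  exact conv_bound Z Y hZmeas hYmeas hZY _
    (fun c => inner_bound B d hmeas hindep hB S hdS hinj c) (m - c₀)
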